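/- Let M be a connected simply laced spherical Coxeter diagram with highest root α_0, and let C be the set of nodes i with (α_i, α_0) = 0. In the Artin group A, define d_β = ψ(w_{α_0,β}^{-1}) and h_{β,i} = d_β^{-1} s_i d_β for a positive root β and a node i with (α_i, β) = 0. Then for every such pair (β, i) there exists a node j in C with h_{β,i} = s_j. -/

import Mathlib

noncomputable section

open scoped RealInnerProductSpace

/-- The braid relators defining the Artin group of a simply laced diagram with
adjacency relation `adj`. -/
def ArtinRels (n : ℕ) (adj : Fin n → Fin n → Prop) : Set (FreeGroup (Fin n)) :=
  {w | (∃ i j, i ≠ j ∧ ¬ adj i j ∧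
          w = FreeGroup.of i * FreeGroup.of j * (FreeGroup.of i)⁻¹ * (FreeGroup.of j)⁻¹) ∨
       (∃ i j, adj i j ∧
          w = FreeGroup.of i * FreeGroup.of j * FreeGroup.of i *
              (FreeGroup.of j)⁻¹ * (FreeGroup.of i)⁻¹ * (FreeGroup.of j)⁻¹)}

/-- The Artin group of the diagram. -/
abbrev Artin (n : ℕ) (adj : Fin n → Fin n → Prop) : Type := PresentedGroup (ArtinRels n adj)

/-- The standard generator `s_i` of the Artin group. -/
def sgen (n : ℕ) (adj : Fin n → Fin n → Prop) (i : Fin n) : Artin n adj :=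
  PresentedGroup.of i

abbrev Evec (d : ℕ) := EuclideanSpace ℝ (Fin d)

structure RootSetup (n d : ℕ) where
  α : Fin n → Evec d
  hind : LinearIndependent ℝ α
  hnorm : ∀ i, ⟪α i, α i⟫ = 2
  hcartan : ∀ i j, i ≠ j → ⟪α i, α j⟫ = 0 ∨ ⟪α i, α j⟫ = -1
  r : Fin n → (Evec d ≃ₗ[ℝ] Evec d)
  hr : ∀ i v, r i v = v - ⟪α i, v⟫ • α i
  W : Subgroup (Evec d ≃ₗ[ℝ] Evec d)
  hW : W = Subgroup.closure (Set.range r)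
  Φ : Set (Evec d)
  hΦ : Φ = {β | ∃ w ∈ W, ∃ i, w (α i) = β}
  ℓ : W → ℕ
  hℓ : ∀ w : W, ℓ w = sInf {k | ∃ ω : List (Fin n),
      ω.length = k ∧ w.1 = (ω.map r).prod}

namespace RootSetup
variable {n d : ℕ} (S : RootSetup n d)

lemma alpha_ne_zero (i : Fin n) : S.α i ≠ 0 := by
  intro h
  have := S.hnorm i
  rw [h, inner_zero_left] at this
  norm_num at this

lemma r_invol (i : Fin n) : S.r i * S.r i = 1 := by
  apply LinearEquiv.ext
  intro v
  show S.r i (S.r i v) = v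
  rw [S.hr, S.hr, inner_sub_right, real_inner_smul_right, S.hnorm]
  module

lemma r_mem (i : Fin n) : S.r i ∈ S.W := by
  rw [S.hW]; exact Subgroup.subset_closure ⟨i, rfl⟩

/-- the simple reflection as an element of W -/
def ρ (i : Fin n) : S.W := ⟨S.r i, S.r_mem i⟩

@[simp] lemma ρ_sq (i : Fin n) : S.ρ i * S.ρ i = 1 := by
  apply Subtype.ext; exact S.r_invol i

@[simp] lemma ρ_inv (i : Fin n) : (S.ρ i)⁻¹ = S.ρ i := by
  rw [inv_eq_iff_mul_eq_one]; exact S.ρ_sq i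

lemma mul_apply (f g : Evec d ≃ₗ[ℝ] Evec d) (v : Evec d) : (f * g) v = f (g v) := rfl

/-- W preserves the inner product. -/
lemma w_inner (w : S.W) (u v : Evec d) : ⟪w.1 u, w.1 v⟫ = ⟪u, v⟫ := by
  let H : Subgroup (Evec d ≃ₗ[ℝ] Evec d) :=
  { carrier := {g | ∀ u v, ⟪g u, g v⟫ = ⟪u, v⟫}
    one_mem' := by intro u v; rfl
    mul_mem' := by
      intro a b ha hb u v
      have : (a * b) u = a (b u) := rfl
      rw [this]
      have : (a * b) v = a (b v) := rfl
      rw [this, ha, hb]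
    inv_mem' := by
      intro a ha u v
      have h1 : a (a⁻¹ u) = u := by
        have : (a * a⁻¹) u = u := by rw [mul_inv_cancel]; rfl
        exact this
      have h2 : a (a⁻¹ v) = v := by
        have : (a * a⁻¹) v = v := by rw [mul_inv_cancel]; rfl
        exact this
      have := ha (a⁻¹ u) (a⁻¹ v)
      rw [h1, h2] at this
      exact this.symm }
  have hle : S.W ≤ H := by
    rw [S.hW]
    apply (Subgroup.closure_le _).mpr
    rintro g ⟨i, rfl⟩ u v
    show ⟪S.r i u, S.r i v⟫ = ⟪u, v⟫
    rw [S.hr, S.hr]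
    simp only [inner_sub_left, inner_sub_right, real_inner_smul_left, real_inner_smul_right,
      S.hnorm]
    rw [real_inner_comm (S.α i) u]
    ring
  exact hle w.2 u v


/-- product of a word, as an element of W -/
def wprod (ω : List (Fin n)) : S.W :=
  ⟨(ω.map S.r).prod, by
    apply Subgroup.list_prod_mem
    intro x hx
    rcases List.mem_map.mp hx with ⟨i, _, rfl⟩
    exact S.r_mem i⟩

@[simp] lemma wprod_val (ω : List (Fin n)) : (S.wprod ω).1 = (ω.map S.r).prod := rfl

@[simp] lemma wprod_nil : S.wprod [] = 1 := by apply Subtype.ext; simp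

lemma wprod_append (ω₁ ω₂ : List (Fin n)) :
    S.wprod (ω₁ ++ ω₂) = S.wprod ω₁ * S.wprod ω₂ := by
  apply Subtype.ext; simp

lemma wprod_cons (i : Fin n) (ω : List (Fin n)) :
    S.wprod (i :: ω) = S.ρ i * S.wprod ω := by
  apply Subtype.ext; simp; rfl

lemma wprod_reverse (ω : List (Fin n)) : S.wprod ω.reverse = (S.wprod ω)⁻¹ := by
  induction ω with
  | nil => simp
  | cons i ω ih =>
    rw [List.reverse_cons, wprod_append, ih, wprod_cons, wprod_nil, mul_one, wprod_cons,
      mul_inv_rev, ρ_inv]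

lemma exists_word (w : S.W) : ∃ ω : List (Fin n), w = S.wprod ω := by
  let H : Subgroup (Evec d ≃ₗ[ℝ] Evec d) :=
  { carrier := {g | ∃ ω : List (Fin n), g = (ω.map S.r).prod}
    one_mem' := ⟨[], by simp⟩
    mul_mem' := by
      rintro a b ⟨ω₁, rfl⟩ ⟨ω₂, rfl⟩
      exact ⟨ω₁ ++ ω₂, by simp⟩
    inv_mem' := by
      rintro a ⟨ω, rfl⟩
      refine ⟨ω.reverse, ?_⟩
      have := congrArg (Subtype.val) (S.wprod_reverse ω)
      simpa using this.symm }
  have hle : S.W ≤ H := by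
    rw [S.hW]
    apply (Subgroup.closure_le _).mpr
    rintro g ⟨i, rfl⟩
    exact ⟨[i], by simp⟩
  rcases hle w.2 with ⟨ω, hω⟩
  exact ⟨ω, Subtype.ext hω⟩

lemma wordSet_nonempty (w : S.W) :
    {k | ∃ ω : List (Fin n), ω.length = k ∧ w.1 = (ω.map S.r).prod}.Nonempty := by
  rcases S.exists_word w with ⟨ω, rfl⟩
  exact ⟨ω.length, ω, rfl, rfl⟩

lemma ℓ_le {w : S.W} {ω : List (Fin n)} (h : w = S.wprod ω) : S.ℓ w ≤ ω.length := by
  rw [S.hℓ]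
  exact Nat.sInf_le ⟨ω, rfl, by rw [h]; rfl⟩

lemma exists_reduced (w : S.W) : ∃ ω : List (Fin n), ω.length = S.ℓ w ∧ w = S.wprod ω := by
  have := Nat.sInf_mem (S.wordSet_nonempty w)
  rw [← S.hℓ] at this
  rcases this with ⟨ω, h1, h2⟩
  exact ⟨ω, h1, Subtype.ext h2⟩

@[simp] lemma ℓ_one : S.ℓ 1 = 0 := by
  have := S.ℓ_le (w := 1) (ω := []) (by simp)
  simpa using this

lemma eq_one_of_ℓ_zero {w : S.W} (h : S.ℓ w = 0) : w = 1 := by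
  rcases S.exists_reduced w with ⟨ω, h1, h2⟩
  rw [h] at h1
  rw [List.length_eq_zero_iff.mp h1] at h2
  simpa using h2

lemma ℓ_inv (w : S.W) : S.ℓ w⁻¹ = S.ℓ w := by
  have key : ∀ v : S.W, S.ℓ v⁻¹ ≤ S.ℓ v := by
    intro v
    rcases S.exists_reduced v with ⟨ω, h1, h2⟩
    have : v⁻¹ = S.wprod ω.reverse := by rw [S.wprod_reverse, h2]
    calc S.ℓ v⁻¹ ≤ ω.reverse.length := S.ℓ_le this
    _ = S.ℓ v := by rw [List.length_reverse, h1]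
  have h2 := key w⁻¹
  rw [inv_inv] at h2
  exact le_antisymm (key w) h2


lemma det_r (i : Fin n) : LinearEquiv.det (S.r i) = -1 := by
  set K : Submodule ℝ (Evec d) := (ℝ ∙ S.α i)ᗮ with hK
  have hre : S.r i = (K.reflection).toLinearEquiv := by
    apply LinearEquiv.ext
    intro v
    obtain ⟨y, hy, z, hz, rfl⟩ := K.exists_add_mem_mem_orthogonal v
    have hzK : z ∈ (ℝ ∙ S.α i) := by rwa [hK, Submodule.orthogonal_orthogonal] at hz
    obtain ⟨c, rfl⟩ := Submodule.mem_span_singleton.mp hzK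
    have hay : ⟪S.α i, y⟫ = 0 := by
      have := hy (S.α i) (Submodule.mem_span_singleton_self _)
      exact this
    have h1 : S.r i (y + c • S.α i) = y - c • S.α i := by
      rw [S.hr]
      rw [inner_add_right, hay, real_inner_smul_right, S.hnorm]
      module
    have h2 : (K.reflection).toLinearEquiv (y + c • S.α i) = y - c • S.α i := by
      show K.reflection (y + c • S.α i) = y - c • S.α i
      rw [map_add, map_smul, Submodule.reflection_mem_subspace_eq_self hy,
        Submodule.reflection_mem_subspace_orthogonalComplement_eq_neg
          (by rw [hK, Submodule.orthogonal_orthogonal]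
              exact Submodule.mem_span_singleton_self _ : S.α i ∈ Kᗮ)]
      module
    rw [h1, h2]
  apply Units.ext
  rw [LinearEquiv.coe_det, hre]
  have : ((K.reflection).toLinearEquiv : Evec d →ₗ[ℝ] Evec d) = (K.reflection).toLinearMap := rfl
  rw [this, Submodule.det_reflection]
  have : Module.finrank ℝ Kᗮ = 1 := by
    rw [hK, Submodule.orthogonal_orthogonal]
    exact finrank_span_singleton (S.alpha_ne_zero i)
  rw [this]
  norm_num

lemma det_word (ω : List (Fin n)) :
    LinearEquiv.det (S.wprod ω).1 = (-1) ^ ω.length := by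
  induction ω with
  | nil => simp
  | cons i ω ih =>
    rw [wprod_cons]
    have : (S.ρ i * S.wprod ω).1 = S.r i * (S.wprod ω).1 := rfl
    rw [this, map_mul, ih, S.det_r, List.length_cons, pow_succ, mul_comm]

lemma det_ℓ (w : S.W) : LinearEquiv.det w.1 = (-1) ^ (S.ℓ w) := by
  rcases S.exists_reduced w with ⟨ω, h1, h2⟩
  have := S.det_word ω
  rw [← h2] at this
  rw [this, h1]

lemma ℓ_mul_ρ (w : S.W) (s : Fin n) :
    S.ℓ (w * S.ρ s) = S.ℓ w + 1 ∨ S.ℓ w = S.ℓ (w * S.ρ s) + 1 := by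
  have hne : S.ℓ (w * S.ρ s) ≠ S.ℓ w := by
    intro h
    have h1 := S.det_ℓ (w * S.ρ s)
    have h2 : (w * S.ρ s).1 = w.1 * S.r s := rfl
    rw [h2, map_mul, S.det_ℓ w, S.det_r, h] at h1
    have hc : ((-1 : ℝˣ)) ^ S.ℓ w * (-1) = ((-1 : ℝˣ)) ^ S.ℓ w * 1 := by
      rw [mul_one]; exact h1
    have h4 : (-1 : ℝˣ) = 1 := mul_left_cancel hc
    have h5 : (-1 : ℝ) = 1 := congrArg Units.val h4
    norm_num at h5
  have hle1 : S.ℓ (w * S.ρ s) ≤ S.ℓ w + 1 := by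
    rcases S.exists_reduced w with ⟨ω, h1, h2⟩
    have hs : S.wprod [s] = S.ρ s := by apply Subtype.ext; simp; rfl
    have : w * S.ρ s = S.wprod (ω ++ [s]) := by
      rw [S.wprod_append, ← h2, hs]
    calc S.ℓ (w * S.ρ s) ≤ (ω ++ [s]).length := S.ℓ_le this
    _ = S.ℓ w + 1 := by simp [h1]
  have hle2 : S.ℓ w ≤ S.ℓ (w * S.ρ s) + 1 := by
    rcases S.exists_reduced (w * S.ρ s) with ⟨ω, h1, h2⟩
    have hs : S.wprod [s] = S.ρ s := by apply Subtype.ext; simp; rfl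
    have : w = S.wprod (ω ++ [s]) := by
      rw [S.wprod_append, ← h2, hs, mul_assoc, ρ_sq, mul_one]
    calc S.ℓ w ≤ (ω ++ [s]).length := S.ℓ_le this
    _ = S.ℓ (w * S.ρ s) + 1 := by simp [h1]
  omega


/-- nonnegative combination of the simple roots -/
def IsNN (v : Evec d) : Prop :=
  ∃ c : Fin n → ℝ, (∀ k, 0 ≤ c k) ∧ v = ∑ k, c k • S.α k

lemma coeff_unique {c c' : Fin n → ℝ} (h : ∑ k, c k • S.α k = ∑ k, c' k • S.α k) : c = c' := by
  have h0 : ∑ k, (c k - c' k) • S.α k = 0 := by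
    simp only [sub_smul, Finset.sum_sub_distrib, h, sub_self]
  funext k
  have := Fintype.linearIndependent_iff.mp S.hind (fun k => c k - c' k) h0 k
  linarith

lemma isNN_alpha (i : Fin n) : S.IsNN (S.α i) := by
  refine ⟨fun k => if k = i then 1 else 0, fun k => by positivity, ?_⟩
  simp [ite_smul]

lemma isNN_add {u v : Evec d} (hu : S.IsNN u) (hv : S.IsNN v) : S.IsNN (u + v) := by
  obtain ⟨c, hc, rfl⟩ := hu
  obtain ⟨e, he, rfl⟩ := hv
  exact ⟨fun k => c k + e k, fun k => by simpa using add_nonneg (hc k) (he k), by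
    rw [← Finset.sum_add_distrib]; simp [add_smul]⟩

lemma isNN_smul {v : Evec d} {t : ℝ} (ht : 0 ≤ t) (hv : S.IsNN v) : S.IsNN (t • v) := by
  obtain ⟨c, hc, rfl⟩ := hv
  exact ⟨fun k => t * c k, fun k => mul_nonneg ht (hc k), by
    rw [Finset.smul_sum]; simp [smul_smul]⟩

lemma eq_zero_of_isNN_isNN_neg {v : Evec d} (h1 : S.IsNN v) (h2 : S.IsNN (-v)) : v = 0 := by
  obtain ⟨c, hc, hcv⟩ := h1
  obtain ⟨e, he, hev⟩ := h2
  have hsum : ∑ k, c k • S.α k = ∑ k, (-(e k)) • S.α k := by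
    rw [← hcv]
    have : v = -∑ k, e k • S.α k := by rw [← hev]; rw [neg_neg]
    rw [this]
    simp [Finset.sum_neg_distrib]
  have := S.coeff_unique hsum
  have hz : ∀ k, c k = 0 := by
    intro k
    have h3 : c k = -(e k) := congrFun this k
    have := hc k; have := he k
    linarith
  rw [hcv]
  apply Finset.sum_eq_zero
  intro k _
  rw [hz k, zero_smul]

lemma alpha_mem_Φ (i : Fin n) : S.α i ∈ S.Φ := by
  rw [S.hΦ]; exact ⟨1, one_mem _, i, rfl⟩

lemma root_w_mem (w : S.W) {γ : Evec d} (hγ : γ ∈ S.Φ) : w.1 γ ∈ S.Φ := by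
  rw [S.hΦ] at hγ ⊢
  obtain ⟨v, hv, i, rfl⟩ := hγ
  exact ⟨w.1 * v, mul_mem w.2 hv, i, rfl⟩

lemma root_norm {γ : Evec d} (hγ : γ ∈ S.Φ) : ⟪γ, γ⟫ = 2 := by
  rw [S.hΦ] at hγ
  obtain ⟨v, hv, i, rfl⟩ := hγ
  have := S.w_inner ⟨v, hv⟩ (S.α i) (S.α i)
  rw [this]
  exact S.hnorm i

lemma root_ne_zero {γ : Evec d} (hγ : γ ∈ S.Φ) : γ ≠ 0 := by
  intro h
  have := S.root_norm hγ
  rw [h, inner_zero_left] at this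
  norm_num at this

/-- integer lattice membership -/
def InLat (v : Evec d) : Prop := ∃ m : Fin n → ℤ, v = ∑ k, (m k : ℝ) • S.α k

lemma cartan_int (i k : Fin n) : ∃ z : ℤ, ⟪S.α i, S.α k⟫ = z := by
  by_cases h : i = k
  · exact ⟨2, by rw [h, S.hnorm]; norm_num⟩
  · rcases S.hcartan i k h with h' | h'
    · exact ⟨0, by rw [h']; norm_num⟩
    · exact ⟨-1, by rw [h']; norm_num⟩

lemma inLat_alpha (i : Fin n) : S.InLat (S.α i) := by
  refine ⟨fun k => if k = i then 1 else 0, ?_⟩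
  simp [ite_smul]

lemma inLat_inner_int {u v : Evec d} (hu : S.InLat u) (hv : S.InLat v) :
    ∃ z : ℤ, ⟪u, v⟫ = z := by
  obtain ⟨a, rfl⟩ := hu
  obtain ⟨b, rfl⟩ := hv
  have : ∀ i k : Fin n, ∃ z : ℤ, ⟪(a i : ℝ) • S.α i, (b k : ℝ) • S.α k⟫ = z := by
    intro i k
    obtain ⟨z, hz⟩ := S.cartan_int i k
    exact ⟨a i * b k * z, by
      rw [real_inner_smul_left, real_inner_smul_right, hz]; push_cast; ring⟩
  rw [sum_inner]
  have step : ∀ i : Fin n, ∃ z : ℤ, ⟪(a i : ℝ) • S.α i, ∑ k, (b k : ℝ) • S.α k⟫ = z := by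
    intro i
    rw [inner_sum]
    choose f hf using this i
    exact ⟨∑ k, f k, by rw [Finset.sum_congr rfl (fun k _ => hf k)]; push_cast; ring⟩
  choose g hg using step
  exact ⟨∑ i, g i, by rw [Finset.sum_congr rfl (fun i _ => hg i)]; push_cast; ring⟩

lemma inLat_sub_int_smul {u v : Evec d} (hu : S.InLat u) (hv : S.InLat v) (z : ℤ) :
    S.InLat (u - (z : ℝ) • v) := by
  obtain ⟨a, rfl⟩ := hu
  obtain ⟨b, rfl⟩ := hv
  refine ⟨fun k => a k - z * b k, ?_⟩
  rw [Finset.smul_sum]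
  rw [← Finset.sum_sub_distrib]
  congr 1
  funext k
  push_cast
  rw [sub_smul, smul_smul]

lemma root_inLat {γ : Evec d} (hγ : γ ∈ S.Φ) : S.InLat γ := by
  let H : Subgroup (Evec d ≃ₗ[ℝ] Evec d) :=
  { carrier := {g | (∀ v, S.InLat v → S.InLat (g v)) ∧ (∀ v, S.InLat v → S.InLat (g.symm v))}
    one_mem' := ⟨fun v hv => hv, fun v hv => hv⟩
    mul_mem' := by
      rintro a b ⟨ha1, ha2⟩ ⟨hb1, hb2⟩
      constructor
      · intro v hv
        exact ha1 _ (hb1 _ hv)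
      · intro v hv
        exact hb2 _ (ha2 _ hv)
    inv_mem' := by
      rintro a ⟨ha1, ha2⟩
      exact ⟨fun v hv => ha2 v hv, fun v hv => ha1 v hv⟩ }
  have hgen : ∀ i : Fin n, S.r i ∈ H := by
    intro i
    have key : ∀ v, S.InLat v → S.InLat (S.r i v) := by
      intro v hv
      rw [S.hr]
      obtain ⟨z, hz⟩ := S.inLat_inner_int (S.inLat_alpha i) hv
      rw [hz]
      exact S.inLat_sub_int_smul hv (S.inLat_alpha i) z
    refine ⟨key, ?_⟩
    intro v hv
    have hsymm : (S.r i).symm = S.r i := by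
      have hinv : (S.r i)⁻¹ = S.r i := by
        rw [inv_eq_iff_mul_eq_one]; exact S.r_invol i
      calc (S.r i).symm = (S.r i)⁻¹ := rfl
      _ = S.r i := hinv
    rw [hsymm]
    exact key v hv
  have hle : S.W ≤ H := by
    rw [S.hW]
    apply (Subgroup.closure_le _).mpr
    rintro g ⟨i, rfl⟩
    exact hgen i
  rw [S.hΦ] at hγ
  obtain ⟨v, hv, i, rfl⟩ := hγ
  exact (hle hv).1 _ (S.inLat_alpha i)

lemma root_nat_coeffs {γ : Evec d} (hγ : γ ∈ S.Φ) (hnn : S.IsNN γ) :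
    ∃ c : Fin n → ℕ, γ = ∑ k, (c k : ℝ) • S.α k := by
  obtain ⟨m, hm⟩ := S.root_inLat hγ
  obtain ⟨c, hc, hc'⟩ := hnn
  have : (fun k => (m k : ℝ)) = c := S.coeff_unique (by rw [← hm, ← hc'])
  have hge : ∀ k, 0 ≤ m k := by
    intro k
    have h1 : (m k : ℝ) = c k := congrFun this k
    have h2 := hc k
    exact_mod_cast h1 ▸ h2
  refine ⟨fun k => (m k).toNat, ?_⟩
  rw [hm]
  apply Finset.sum_congr rfl
  intro k _
  congr 1
  exact_mod_cast congrArg (Int.cast : ℤ → ℝ) (Int.toNat_of_nonneg (hge k)).symm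


lemma ℓ_mul_ρ_le (w : S.W) (s : Fin n) : S.ℓ (w * S.ρ s) ≤ S.ℓ w + 1 := by
  rcases S.ℓ_mul_ρ w s with h | h <;> omega

lemma rho_comm {s t : Fin n} (h : ⟪S.α s, S.α t⟫ = 0) : S.ρ s * S.ρ t = S.ρ t * S.ρ s := by
  have h' : ⟪S.α t, S.α s⟫ = 0 := by rw [real_inner_comm]; exact h
  apply Subtype.ext
  apply LinearEquiv.ext
  intro v
  show S.r s (S.r t v) = S.r t (S.r s v)
  simp only [S.hr, inner_sub_right, real_inner_smul_right, h, h']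
  module

lemma rho_braid {s t : Fin n} (h : ⟪S.α s, S.α t⟫ = -1) :
    S.ρ s * S.ρ t * S.ρ s = S.ρ t * S.ρ s * S.ρ t := by
  have h' : ⟪S.α t, S.α s⟫ = -1 := by rw [real_inner_comm]; exact h
  apply Subtype.ext
  apply LinearEquiv.ext
  intro v
  show S.r s (S.r t (S.r s v)) = S.r t (S.r s (S.r t v))
  simp only [S.hr, inner_sub_right, real_inner_smul_right, h, h', S.hnorm]
  module

lemma wprod_singleton (t : Fin n) : S.wprod [t] = S.ρ t := by
  apply Subtype.ext; simp; rfl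

lemma key_lemma (m : ℕ) : ∀ w : S.W, S.ℓ w = m → ∀ s : Fin n,
    S.ℓ w < S.ℓ (w * S.ρ s) → S.IsNN (w.1 (S.α s)) := by
  induction m using Nat.strong_induction_on with
  | _ m IH =>
  intro w hm s hs
  rcases Nat.eq_zero_or_pos m with hm0 | hmpos
  · have : w = 1 := S.eq_one_of_ℓ_zero (by rw [hm, hm0])
    rw [this]
    show S.IsNN ((1 : Evec d ≃ₗ[ℝ] Evec d) (S.α s))
    exact S.isNN_alpha s
  · -- find the last letter t of a reduced word
    rcases S.exists_reduced w with ⟨ω, hlen, hw⟩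
    rcases ω.eq_nil_or_concat with rfl | ⟨ω', t, rfl⟩
    · simp at hlen; omega
    rw [List.concat_eq_append] at hlen hw
    have hw' : w = S.wprod ω' * S.ρ t := by
      rw [hw, S.wprod_append, S.wprod_singleton]
    obtain ⟨v, hv_def⟩ : ∃ v : S.W, v = w * S.ρ t := ⟨_, rfl⟩
    have hv_eq : v = S.wprod ω' := by
      rw [hv_def, hw', mul_assoc, ρ_sq, mul_one]
    have hvle : S.ℓ v ≤ m - 1 := by
      have h1 := S.ℓ_le hv_eq
      have h2 : (ω' ++ [t]).length = m := by rw [hlen, hm]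
      simp at h2
      omega
    have hvℓ : S.ℓ v = m - 1 := by
      rcases S.ℓ_mul_ρ w t with h | h <;> rw [← hv_def] at h <;> omega
    have hwv : w = v * S.ρ t := by
      rw [hv_def, mul_assoc, ρ_sq, mul_one]
    have hst : s ≠ t := by
      rintro rfl
      rw [← hv_def] at hs
      omega
    have happ : ∀ (x : S.W) (j : Fin n) (u : Evec d), (x * S.ρ j).1 u = x.1 (S.r j u) := by
      intro x j u; rfl
    rcases S.hcartan s t hst with hct | hct
    all_goals have hct' : ⟪S.α t, S.α s⟫ = ⟪S.α s, S.α t⟫ := real_inner_comm _ _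
    · -- orthogonal case
      rcases S.ℓ_mul_ρ v s with hup | hdown
      · have h1 : S.IsNN (v.1 (S.α s)) := IH (m - 1) (by omega) v hvℓ s (by omega)
        have h2 : w.1 (S.α s) = v.1 (S.α s) := by
          rw [hwv, happ, S.hr, hct', hct]
          rw [show S.α s - (0 : ℝ) • S.α t = S.α s by module]
        rw [h2]; exact h1
      · exfalso
        obtain ⟨v', hv'_def⟩ : ∃ v' : S.W, v' = v * S.ρ s := ⟨_, rfl⟩
        rw [← hv'_def] at hdown
        have hcomm := S.rho_comm hct
        have hkey : w * S.ρ s = v' * S.ρ t := by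
          rw [hv'_def, hwv]
          calc v * S.ρ t * S.ρ s = v * (S.ρ t * S.ρ s) := by rw [mul_assoc]
          _ = v * (S.ρ s * S.ρ t) := by rw [hcomm]
          _ = v * S.ρ s * S.ρ t := by rw [mul_assoc]
        have : S.ℓ (w * S.ρ s) ≤ S.ℓ v' + 1 := by rw [hkey]; exact S.ℓ_mul_ρ_le v' t
        omega
    · -- adjacent case
      rcases S.ℓ_mul_ρ v s with hup | hdown
      · have h1 : S.IsNN (v.1 (S.α s)) := IH (m - 1) (by omega) v hvℓ s (by omega)
        have h1t : S.IsNN (v.1 (S.α t)) := by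
          apply IH (m - 1) (by omega) v hvℓ t
          rw [← hwv, hm]
          omega
        have h2 : w.1 (S.α s) = v.1 (S.α s) + v.1 (S.α t) := by
          rw [hwv, happ, S.hr, hct', hct]
          rw [show S.α s - (-1 : ℝ) • S.α t = S.α s + S.α t by module]
          rw [map_add]
        rw [h2]; exact S.isNN_add h1 h1t
      · obtain ⟨v', hv'_def⟩ : ∃ v' : S.W, v' = v * S.ρ s := ⟨_, rfl⟩
        rw [← hv'_def] at hdown
        have hvv' : v = v' * S.ρ s := by
          rw [hv'_def, mul_assoc, ρ_sq, mul_one]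
        have hv'ℓ : S.ℓ v' = m - 2 := by omega
        rcases S.ℓ_mul_ρ v' t with hup2 | hdown2
        · have h1 : S.IsNN (v'.1 (S.α t)) := by
            apply IH (m - 2) (by omega) v' hv'ℓ t
            omega
          have hwv' : w = v' * S.ρ s * S.ρ t := by
            rw [hwv, hvv']
          have h2 : w.1 (S.α s) = v'.1 (S.α t) := by
            rw [hwv', happ, happ]
            congr 1
            rw [S.hr t (S.α s), hct', hct]
            rw [show S.α s - (-1 : ℝ) • S.α t = S.α s + S.α t by module]
            rw [S.hr s, inner_add_right, S.hnorm, hct]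
            module
          rw [h2]; exact h1
        · exfalso
          obtain ⟨v'', hv''_def⟩ : ∃ v'' : S.W, v'' = v' * S.ρ t := ⟨_, rfl⟩
          rw [← hv''_def] at hdown2
          have hv'v : v' = v'' * S.ρ t := by
            rw [hv''_def, mul_assoc, ρ_sq, mul_one]
          have hbraid := S.rho_braid hct
          have hkey : w * S.ρ s = v'' * S.ρ s * S.ρ t := by
            rw [hwv, hvv', hv'v]
            calc v'' * S.ρ t * S.ρ s * S.ρ t * S.ρ s
                = v'' * (S.ρ t * S.ρ s * S.ρ t) * S.ρ s := by group
              _ = v'' * (S.ρ s * S.ρ t * S.ρ s) * S.ρ s := by rw [hbraid]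
              _ = v'' * S.ρ s * S.ρ t * (S.ρ s * S.ρ s) := by group
              _ = v'' * S.ρ s * S.ρ t := by rw [ρ_sq, mul_one]
          have hb1 : S.ℓ (v'' * S.ρ s) ≤ S.ℓ v'' + 1 := S.ℓ_mul_ρ_le v'' s
          have hb2 : S.ℓ (w * S.ρ s) ≤ S.ℓ (v'' * S.ρ s) + 1 := by
            rw [hkey]; exact S.ℓ_mul_ρ_le _ t
          omega

lemma isNN_neg_of_ℓ_lt {w : S.W} {s : Fin n} (h : S.ℓ (w * S.ρ s) < S.ℓ w) :
    S.IsNN (-(w.1 (S.α s))) := by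
  have h2 : S.ℓ (w * S.ρ s) < S.ℓ (w * S.ρ s * S.ρ s) := by
    rw [mul_assoc, ρ_sq, mul_one]; exact h
  have := S.key_lemma (S.ℓ (w * S.ρ s)) (w * S.ρ s) rfl s h2
  have heq : (w * S.ρ s).1 (S.α s) = -(w.1 (S.α s)) := by
    have : (w * S.ρ s).1 (S.α s) = w.1 (S.r s (S.α s)) := rfl
    rw [this, S.hr, S.hnorm]
    rw [show S.α s - (2 : ℝ) • S.α s = -(S.α s) by module]
    rw [map_neg]
  rwa [heq] at this

lemma ℓ_up_of_isNN {w : S.W} {s : Fin n} (h : S.IsNN (w.1 (S.α s))) :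
    S.ℓ (w * S.ρ s) = S.ℓ w + 1 := by
  rcases S.ℓ_mul_ρ w s with h1 | h1
  · exact h1
  · exfalso
    have h2 := S.isNN_neg_of_ℓ_lt (w := w) (s := s) (by omega)
    have h3 := S.eq_zero_of_isNN_isNN_neg h h2
    exact S.root_ne_zero (S.root_w_mem w (S.alpha_mem_Φ s)) h3

lemma ℓ_down_of_not_isNN {w : S.W} {s : Fin n} (h : ¬ S.IsNN (w.1 (S.α s))) :
    S.ℓ w = S.ℓ (w * S.ρ s) + 1 := by
  rcases S.ℓ_mul_ρ w s with h1 | h1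
  · exact absurd (S.key_lemma (S.ℓ w) w rfl s (by omega)) h
  · exact h1

lemma root_dichotomy {γ : Evec d} (hγ : γ ∈ S.Φ) : S.IsNN γ ∨ S.IsNN (-γ) := by
  rw [S.hΦ] at hγ
  obtain ⟨v, hv, i, rfl⟩ := hγ
  set vv : S.W := ⟨v, hv⟩ with hvv
  rcases S.ℓ_mul_ρ vv i with h | h
  · left; exact S.key_lemma (S.ℓ vv) vv rfl i (by omega)
  · right; exact S.isNN_neg_of_ℓ_lt (w := vv) (s := i) (by omega)

lemma isNN_r_of_ne {θ : Evec d} {k : Fin n} (hθΦ : θ ∈ S.Φ) (hnn : S.IsNN θ)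
    (hne : θ ≠ S.α k) : S.IsNN (S.r k θ) := by
  have hrΦ : S.r k θ ∈ S.Φ := S.root_w_mem (S.ρ k) hθΦ
  rcases S.root_dichotomy hrΦ with h | h
  · exact h
  · exfalso
    obtain ⟨c, hc, hcθ⟩ := hnn
    obtain ⟨e, he, heθ⟩ := h
    set z := ⟪S.α k, θ⟫ with hz
    have hsum : ∑ j, (c j + e j - (if j = k then z else 0)) • S.α j = ∑ j, (0 : ℝ) • S.α j := by
      have h1 : S.r k θ = θ - z • S.α k := by rw [S.hr]
      have h2 : θ - z • S.α k = -∑ j, e j • S.α j := by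
        rw [← h1, ← heθ]; rw [neg_neg]
      have h3 : ∑ j, c j • S.α j - z • S.α k + ∑ j, e j • S.α j = 0 := by
        rw [← hcθ, h2]
        module
      have h4 : ∑ j, (c j + e j - (if j = k then z else 0)) • S.α j = 0 := by
        simp only [sub_smul, add_smul, ite_smul, zero_smul]
        rw [Finset.sum_sub_distrib, Finset.sum_add_distrib, Finset.sum_ite_eq' Finset.univ k]
        simp only [Finset.mem_univ, if_true]
        rw [← h3]
        abel
      rw [h4]
      simp
    have hco := S.coeff_unique hsum
    have hcj : ∀ j, j ≠ k → c j = 0 := by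
      intro j hj
      have := congrFun hco j
      simp [hj] at this
      have h1 := hc j; have h2 := he j
      linarith
    have hθeq : θ = c k • S.α k := by
      rw [hcθ]
      rw [Finset.sum_eq_single k]
      · intro j _ hj; rw [hcj j hj, zero_smul]
      · intro hk; exact absurd (Finset.mem_univ k) hk
    have hn2 := S.root_norm hθΦ
    rw [hθeq] at hn2
    rw [real_inner_smul_left, real_inner_smul_right, S.hnorm] at hn2
    have hck : c k = 1 := by
      have h1 := hc k
      nlinarith
    rw [hck, one_smul] at hθeq
    exact hne hθeq

lemma w_inner_left (w : S.W) (u x : Evec d) : ⟪w.1 u, x⟫ = ⟪u, (w⁻¹).1 x⟫ := by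
  have h1 : w.1 ((w⁻¹).1 x) = x := by
    have : (w * w⁻¹).1 x = x := by rw [mul_inv_cancel]; rfl
    exact this
  calc ⟪w.1 u, x⟫ = ⟪w.1 u, w.1 ((w⁻¹).1 x)⟫ := by rw [h1]
  _ = ⟪u, (w⁻¹).1 x⟫ := S.w_inner w u _

lemma root_reflection {γ : Evec d} (hγ : γ ∈ S.Φ) :
    ∃ R : S.W, ∀ x, R.1 x = x - ⟪γ, x⟫ • γ := by
  rw [S.hΦ] at hγ
  obtain ⟨v, hv, i, hvi⟩ := hγ
  set vv : S.W := ⟨v, hv⟩ with hvv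
  refine ⟨vv * S.ρ i * vv⁻¹, ?_⟩
  intro x
  have h1 : (vv * S.ρ i * vv⁻¹).1 x = vv.1 (S.r i ((vv⁻¹).1 x)) := rfl
  rw [h1, S.hr]
  rw [map_sub, map_smul]
  have h2 : vv.1 ((vv⁻¹).1 x) = x := by
    have : (vv * vv⁻¹).1 x = x := by rw [mul_inv_cancel]; rfl
    exact this
  rw [h2]
  have h3 : ⟪S.α i, (vv⁻¹).1 x⟫ = ⟪γ, x⟫ := by
    rw [← S.w_inner_left vv (S.α i) x]
    have : vv.1 (S.α i) = γ := hvi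
    rw [this]
  rw [h3]
  have : vv.1 (S.α i) = γ := hvi
  rw [this]

lemma strong_exchange {w : S.W} {δ : Evec d} (hδ : δ ∈ S.Φ) (hnn : S.IsNN δ)
    (hneg : ¬ S.IsNN (w.1 δ)) {R : S.W} (hR : ∀ x, R.1 x = x - ⟪δ, x⟫ • δ) :
    S.ℓ (w * R) < S.ℓ w := by
  rcases S.exists_reduced w with ⟨ω, hlen, hw⟩
  have hA : (S.wprod (ω.drop ω.length)).1 δ = δ := by
    rw [List.drop_length]
    simp
  set A : Set ℕ := {t | S.IsNN ((S.wprod (ω.drop t)).1 δ)} with hAdef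
  have hmem : ω.length ∈ A := by rw [hAdef]; simp only [Set.mem_setOf_eq]; rw [hA]; exact hnn
  have hne : A.Nonempty := ⟨_, hmem⟩
  obtain ⟨T, hT⟩ : ∃ T, T = sInf A := ⟨_, rfl⟩
  have hTmem : T ∈ A := by rw [hT]; exact Nat.sInf_mem hne
  have hTle : T ≤ ω.length := by rw [hT]; exact Nat.sInf_le hmem
  have hT0 : 0 ∉ A := by
    rw [hAdef]
    simp only [Set.mem_setOf_eq, List.drop_zero]
    rw [← hw]
    exact hneg
  have hTpos : 1 ≤ T := by
    rcases Nat.eq_zero_or_pos T with h | h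
    · exact absurd (h ▸ hTmem) hT0
    · omega
  have hTm1 : T - 1 ∉ A := by
    intro hc
    have h5 : sInf A ≤ T - 1 := Nat.sInf_le hc
    omega
  have hTm1lt : T - 1 < ω.length := by omega
  set k := ω[T-1] with hk
  have hdropsplit : ω.drop (T - 1) = k :: ω.drop T := by
    rw [hk]
    have h6 := List.drop_eq_getElem_cons hTm1lt
    have h7 : T - 1 + 1 = T := by omega
    rw [h7] at h6
    exact h6
  set P : S.W := S.wprod (ω.drop T) with hP
  have hθΦ : P.1 δ ∈ S.Φ := S.root_w_mem P hδ
  have hθnn : S.IsNN (P.1 δ) := hTmem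
  have hrneg : ¬ S.IsNN (S.r k (P.1 δ)) := by
    intro hc
    apply hTm1
    rw [hAdef]
    simp only [Set.mem_setOf_eq]
    rw [hdropsplit, S.wprod_cons]
    exact hc
  have hθα : P.1 δ = S.α k := by
    by_contra hne'
    exact hrneg (S.isNN_r_of_ne hθΦ hθnn hne')
  -- R = P⁻¹ * ρ k * P
  have hRd : R = P⁻¹ * S.ρ k * P := by
    apply Subtype.ext
    apply LinearEquiv.ext
    intro x
    have h1 : (P⁻¹ * S.ρ k * P).1 x = (P⁻¹).1 (S.r k (P.1 x)) := rfl
    rw [show (R.1 : Evec d ≃ₗ[ℝ] Evec d) x = R.1 x from rfl]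
    rw [hR x, h1, S.hr]
    rw [map_sub, map_smul]
    have h2 : (P⁻¹).1 (P.1 x) = x := by
      have : (P⁻¹ * P).1 x = x := by rw [inv_mul_cancel]; rfl
      exact this
    rw [h2]
    have h3 : (P⁻¹).1 (S.α k) = δ := by
      rw [← hθα]
      have : (P⁻¹ * P).1 δ = δ := by rw [inv_mul_cancel]; rfl
      exact this
    rw [h3]
    have h4 : ⟪S.α k, P.1 x⟫ = ⟪δ, x⟫ := by
      rw [← hθα]
      exact S.w_inner P δ x
    rw [h4]
  have hwd : w = S.wprod (ω.take (T-1)) * (S.ρ k * P) := by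
    conv_lhs => rw [hw]
    rw [← S.wprod_cons, ← hdropsplit, ← S.wprod_append, List.take_append_drop]
  have hcalc : w * R = S.wprod (ω.take (T-1)) * (S.ρ k * S.ρ k) * P := by
    rw [hwd, hRd]
    group
  rw [ρ_sq, mul_one] at hcalc
  have hfinal : w * R = S.wprod (ω.take (T-1) ++ ω.drop T) := by
    rw [S.wprod_append, hcalc, hP]
  have hlen2 : (ω.take (T-1) ++ ω.drop T).length = (T - 1) + (ω.length - T) := by
    simp only [List.length_append, List.length_take, List.length_drop]
    omega
  have hlast : S.ℓ (w * R) ≤ (T - 1) + (ω.length - T) := by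
    rw [← hlen2]; exact S.ℓ_le hfinal
  omega


lemma ℓ_left_up {w : S.W} {s : Fin n} (h : S.IsNN ((w⁻¹).1 (S.α s))) :
    S.ℓ (S.ρ s * w) = S.ℓ w + 1 := by
  have h1 : (S.ρ s * w)⁻¹ = w⁻¹ * S.ρ s := by rw [mul_inv_rev, ρ_inv]
  have h2 : S.ℓ (S.ρ s * w) = S.ℓ (w⁻¹ * S.ρ s) := by rw [← S.ℓ_inv (S.ρ s * w), h1]
  rw [h2, S.ℓ_up_of_isNN h, S.ℓ_inv]

lemma ℓ_left_down {w : S.W} {s : Fin n} (h : ¬ S.IsNN ((w⁻¹).1 (S.α s))) :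
    S.ℓ w = S.ℓ (S.ρ s * w) + 1 := by
  have h1 : (S.ρ s * w)⁻¹ = w⁻¹ * S.ρ s := by rw [mul_inv_rev, ρ_inv]
  have h2 : S.ℓ (S.ρ s * w) = S.ℓ (w⁻¹ * S.ρ s) := by rw [← S.ℓ_inv (S.ρ s * w), h1]
  rw [h2, ← S.ℓ_inv w]
  exact S.ℓ_down_of_not_isNN h

lemma inner_alpha0_nonneg (α₀ : Evec d) (c₀ : Fin n → ℕ) (hα₀Φ : α₀ ∈ S.Φ)
    (hα₀c : α₀ = ∑ k, (c₀ k : ℝ) • S.α k)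
    (hhighest : ∀ β ∈ S.Φ, ∀ c : Fin n → ℕ, β = ∑ k, (c k : ℝ) • S.α k → ∀ k, c k ≤ c₀ k)
    {δ : Evec d} (hδΦ : δ ∈ S.Φ) (hδnn : S.IsNN δ) : 0 ≤ ⟪δ, α₀⟫ := by
  by_contra hlt
  push_neg at hlt
  obtain ⟨t, ht⟩ := S.inLat_inner_int (S.root_inLat hδΦ) (S.root_inLat hα₀Φ)
  have htneg : t ≤ -1 := by
    have h7 : (t : ℝ) < 0 := by rw [← ht]; exact hlt
    have : t < 0 := by exact_mod_cast h7
    omega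
  obtain ⟨R, hR⟩ := S.root_reflection hδΦ
  have hθΦ : R.1 α₀ ∈ S.Φ := S.root_w_mem R hα₀Φ
  have hθ : R.1 α₀ = α₀ + (-t : ℝ) • δ := by
    rw [hR, ht]
    module
  obtain ⟨a, ha⟩ := S.root_nat_coeffs hδΦ hδnn
  have hθc : R.1 α₀ = ∑ k, ((c₀ k + (-t).toNat * a k : ℕ) : ℝ) • S.α k := by
    rw [hθ, hα₀c, ha]
    rw [Finset.smul_sum, ← Finset.sum_add_distrib]
    apply Finset.sum_congr rfl
    intro k _
    rw [smul_smul, ← add_smul]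
    congr 1
    have h8 : (((-t).toNat : ℕ) : ℝ) = -(t : ℝ) := by
      exact_mod_cast congrArg (Int.cast : ℤ → ℝ) (Int.toNat_of_nonneg (by omega : (0:ℤ) ≤ -t))
    push_cast [h8]
    try ring
  have hle := hhighest _ hθΦ _ hθc
  have haz : ∀ k, a k = 0 := by
    intro k
    have := hle k
    have h2 : (-t).toNat ≥ 1 := by omega
    nlinarith [this, h2]
  have hδ0 : δ = 0 := by
    rw [ha]
    apply Finset.sum_eq_zero
    intro k _
    rw [haz k]
    simp
  exact S.root_ne_zero hδΦ hδ0

lemma exists_descent {γ : Evec d} (hγΦ : γ ∈ S.Φ) (hnn : S.IsNN γ)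
    (hns : ∀ j, γ ≠ S.α j) :
    ∃ k, ⟪S.α k, γ⟫ = 1 ∧ (γ - S.α k) ∈ S.Φ ∧ S.IsNN (γ - S.α k) := by
  obtain ⟨c, hc, hcγ⟩ := hnn
  have hnorm2 : ⟪γ, γ⟫ = 2 := S.root_norm hγΦ
  have hsum : ∑ k, c k * ⟪S.α k, γ⟫ = 2 := by
    calc ∑ k, c k * ⟪S.α k, γ⟫ = ∑ k, ⟪c k • S.α k, γ⟫ := by
          apply Finset.sum_congr rfl
          intro k _
          rw [real_inner_smul_left]
      _ = ⟪∑ k, c k • S.α k, γ⟫ := by rw [sum_inner]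
      _ = ⟪γ, γ⟫ := by rw [← hcγ]
      _ = 2 := hnorm2
  have hexk : ∃ k, 0 < ⟪S.α k, γ⟫ := by
    by_contra hno
    push_neg at hno
    have : ∑ k, c k * ⟪S.α k, γ⟫ ≤ 0 := by
      apply Finset.sum_nonpos
      intro k _
      exact mul_nonpos_of_nonneg_of_nonpos (hc k) (hno k)
    linarith
  obtain ⟨k, hk⟩ := hexk
  obtain ⟨z, hz⟩ := S.inLat_inner_int (S.inLat_alpha k) (S.root_inLat hγΦ)
  have hz1 : 1 ≤ z := by
    have : (0 : ℝ) < z := by rw [← hz]; exact hk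
    have : 0 < z := by exact_mod_cast this
    omega
  have hγk : γ ≠ S.α k := hns k
  have hz' : ⟪γ, S.α k⟫ = (z : ℝ) := by rw [real_inner_comm]; exact hz
  have hnormsub : ⟪γ - S.α k, γ - S.α k⟫ = 4 - 2 * (z : ℝ) := by
    simp only [inner_sub_left, inner_sub_right]
    rw [hnorm2, S.hnorm, hz, hz']
    ring
  have hzle : z ≤ 1 := by
    by_contra hz2
    push_neg at hz2
    have hsub0 : ⟪γ - S.α k, γ - S.α k⟫ ≤ 0 := by
      rw [hnormsub]
      have : (2 : ℝ) ≤ (z : ℝ) := by exact_mod_cast hz2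
      linarith
    have hge := real_inner_self_nonneg (x := γ - S.α k)
    have heq0 : ⟪γ - S.α k, γ - S.α k⟫ = 0 := le_antisymm hsub0 hge
    have : γ - S.α k = 0 := by
      rwa [real_inner_self_eq_norm_sq, pow_eq_zero_iff (by norm_num), norm_eq_zero] at heq0
    exact hγk (by rwa [sub_eq_zero] at this)
  have hzeq : z = 1 := le_antisymm hzle hz1
  have hinner1 : ⟪S.α k, γ⟫ = 1 := by rw [hz, hzeq]; norm_num
  have hrk : S.r k γ = γ - S.α k := by
    rw [S.hr, hinner1, one_smul]
  refine ⟨k, hinner1, ?_, ?_⟩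
  · rw [← hrk]
    exact S.root_w_mem (S.ρ k) hγΦ
  · rw [← hrk]
    exact S.isNN_r_of_ne hγΦ ⟨c, hc, hcγ⟩ hγk

theorem main_simple (α₀ : Evec d) (c₀ : Fin n → ℕ) (hα₀Φ : α₀ ∈ S.Φ)
    (hα₀c : α₀ = ∑ k, (c₀ k : ℝ) • S.α k)
    (hhighest : ∀ β ∈ S.Φ, ∀ c : Fin n → ℕ, β = ∑ k, (c k : ℝ) • S.α k → ∀ k, c k ≤ c₀ k)
    (β : Evec d) (hβΦ : β ∈ S.Φ) (i : Fin n) (horth : ⟪S.α i, β⟫ = 0)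
    (w : S.W) (hwβ : w.1 β = α₀) (hwmin : ∀ v : S.W, v.1 β = α₀ → S.ℓ w ≤ S.ℓ v) :
    ∃ j, w.1 (S.α i) = S.α j := by
  have hγΦ : w.1 (S.α i) ∈ S.Φ := S.root_w_mem w (S.alpha_mem_Φ i)
  have hγ₀ : ⟪w.1 (S.α i), α₀⟫ = 0 := by
    rw [← hwβ, S.w_inner w (S.α i) β]
    exact horth
  have hriβ : (w * S.ρ i).1 β = α₀ := by
    have h1 : (w * S.ρ i).1 β = w.1 (S.r i β) := rfl
    rw [h1, S.hr, horth, zero_smul, sub_zero, hwβ]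
  have hγnn : S.IsNN (w.1 (S.α i)) := by
    by_contra hno
    have := S.ℓ_down_of_not_isNN hno
    have := hwmin (w * S.ρ i) hriβ
    omega
  by_contra hns
  push_neg at hns
  obtain ⟨k, hk1, hk2, hk3⟩ := S.exists_descent hγΦ hγnn hns
  -- ⟪α k, α₀⟫ = 0
  have hγmk : 0 ≤ ⟪w.1 (S.α i) - S.α k, α₀⟫ :=
    S.inner_alpha0_nonneg α₀ c₀ hα₀Φ hα₀c hhighest hk2 hk3
  have hkge : 0 ≤ ⟪S.α k, α₀⟫ :=
    S.inner_alpha0_nonneg α₀ c₀ hα₀Φ hα₀c hhighest (S.alpha_mem_Φ k) (S.isNN_alpha k)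
  have hkα₀ : ⟪S.α k, α₀⟫ = 0 := by
    rw [inner_sub_left, hγ₀] at hγmk
    linarith
  -- δ' = w⁻¹ (α k)
  have hδ'Φ : (w⁻¹).1 (S.α k) ∈ S.Φ := S.root_w_mem w⁻¹ (S.alpha_mem_Φ k)
  have hwδ' : w.1 ((w⁻¹).1 (S.α k)) = S.α k := by
    have : (w * w⁻¹).1 (S.α k) = S.α k := by rw [mul_inv_cancel]; rfl
    exact this
  have hρkw : (S.ρ k * w).1 β = α₀ := by
    have h1 : (S.ρ k * w).1 β = S.r k (w.1 β) := rfl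
    rw [h1, hwβ, S.hr, hkα₀, zero_smul, sub_zero]
  have hδ'nn : S.IsNN ((w⁻¹).1 (S.α k)) := by
    by_contra hno
    have := S.ℓ_left_down hno
    have := hwmin (S.ρ k * w) hρkw
    omega
  have hδ'i : ⟪S.α i, (w⁻¹).1 (S.α k)⟫ = 1 := by
    rw [← S.w_inner w (S.α i) ((w⁻¹).1 (S.α k)), hwδ']
    rw [real_inner_comm]
    exact hk1
  have hδ'ne : (w⁻¹).1 (S.α k) ≠ S.α i := by
    intro h
    rw [h, S.hnorm] at hδ'i
    norm_num at hδ'i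
  have hriδ' : S.r i ((w⁻¹).1 (S.α k)) = (w⁻¹).1 (S.α k) - S.α i := by
    rw [S.hr, hδ'i, one_smul]
  have hδ''Φ : (w⁻¹).1 (S.α k) - S.α i ∈ S.Φ := by
    rw [← hriδ']
    exact S.root_w_mem (S.ρ i) hδ'Φ
  have hδ''nn : S.IsNN ((w⁻¹).1 (S.α k) - S.α i) := by
    rw [← hriδ']
    exact S.isNN_r_of_ne hδ'Φ hδ'nn hδ'ne
  have hδ''β : ⟪(w⁻¹).1 (S.α k) - S.α i, β⟫ = 0 := by
    rw [inner_sub_left, horth, sub_zero]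
    rw [S.w_inner_left w⁻¹ (S.α k) β, inv_inv, hwβ]
    exact hkα₀
  have hwδ'' : w.1 ((w⁻¹).1 (S.α k) - S.α i) = -(w.1 (S.α i) - S.α k) := by
    rw [map_sub, hwδ']
    module
  have hwδ''neg : ¬ S.IsNN (w.1 ((w⁻¹).1 (S.α k) - S.α i)) := by
    rw [hwδ'']
    intro hc
    have := S.eq_zero_of_isNN_isNN_neg hk3 hc
    exact S.root_ne_zero hk2 this
  obtain ⟨R, hR⟩ := S.root_reflection hδ''Φ
  have hRβ : (w * R).1 β = α₀ := by
    have h1 : (w * R).1 β = w.1 (R.1 β) := rfl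
    rw [h1, hR, hδ''β, zero_smul, sub_zero, hwβ]
  have := S.strong_exchange hδ''Φ hδ''nn hwδ''neg hR
  have := hwmin (w * R) hRβ
  omega
end RootSetup


/-- Let `M` be a connected simply laced spherical diagram with highest root `α₀` and
`C` the set of nodes orthogonal to `α₀`. For a positive root `β` and a node `i` with
`(α i, β) = 0`, letting `w` be the shortest element of `W` with `w β = α₀` and
`d_β = ψ (w⁻¹)`, the element `h_{β,i} = d_β⁻¹ s_i d_β` of the Artin group equals `s_j`
for some node `j ∈ C`. -/
theorem artin_h_beta_i_in_C (n d : ℕ)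
    (α : Fin n → EuclideanSpace ℝ (Fin d))
    (hind : LinearIndependent ℝ α)
    (hnorm : ∀ i, ⟪α i, α i⟫ = 2)
    (hcartan : ∀ i j, i ≠ j → ⟪α i, α j⟫ = 0 ∨ ⟪α i, α j⟫ = -1)
    (hconn : ∀ i j : Fin n, ∃ p : List (Fin n), p ≠ [] ∧ p.head? = some i ∧
      p.getLast? = some j ∧ p.Chain' (fun a b => ⟪α a, α b⟫ = -1))
    (r : Fin n → (EuclideanSpace ℝ (Fin d) ≃ₗ[ℝ] EuclideanSpace ℝ (Fin d)))
    (hr : ∀ i v, r i v = v - ⟪α i, v⟫ • α i)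
    (W : Subgroup (EuclideanSpace ℝ (Fin d) ≃ₗ[ℝ] EuclideanSpace ℝ (Fin d)))
    (hW : W = Subgroup.closure (Set.range r))
    (hfin : Finite W)
    (Φ : Set (EuclideanSpace ℝ (Fin d)))
    (hΦ : Φ = {β | ∃ w ∈ W, ∃ i, w (α i) = β})
    (ℓ : W → ℕ)
    (hℓ : ∀ w : W, ℓ w = sInf {k | ∃ ω : List (Fin n),
      ω.length = k ∧ w.1 = (ω.map r).prod})
    (adj : Fin n → Fin n → Prop)
    (hadj : ∀ i j, adj i j ↔ ⟪α i, α j⟫ = -1)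
    (ψ : W → Artin n adj)
    (hψ : ∀ (w : W) (ω : List (Fin n)), w.1 = (ω.map r).prod → ω.length = ℓ w →
      ψ w = (ω.map (sgen n adj)).prod)
    (α₀ : EuclideanSpace ℝ (Fin d)) (c₀ : Fin n → ℕ)
    (hα₀Φ : α₀ ∈ Φ) (hα₀c : α₀ = ∑ k, (c₀ k : ℝ) • α k)
    (hhighest : ∀ β ∈ Φ, ∀ c : Fin n → ℕ, β = ∑ k, (c k : ℝ) • α k →
      ∀ k, c k ≤ c₀ k)
    (β : EuclideanSpace ℝ (Fin d)) (c : Fin n → ℕ)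
    (hβΦ : β ∈ Φ) (hβc : β = ∑ k, (c k : ℝ) • α k)
    (i : Fin n) (horth : ⟪α i, β⟫ = 0)
    (w : W) (hwβ : w.1 β = α₀)
    (hwmin : ∀ v : W, v.1 β = α₀ → ℓ w ≤ ℓ v) :
    ∃ j : Fin n, ⟪α j, α₀⟫ = 0 ∧
      (ψ w⁻¹)⁻¹ * sgen n adj i * ψ w⁻¹ = sgen n adj j := by
  set S : RootSetup n d := ⟨α, hind, hnorm, hcartan, r, hr, W, hW, Φ, hΦ, ℓ, hℓ⟩ with hS
  have hSα : S.α = α := rfl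
  have hSℓ : S.ℓ = ℓ := rfl
  obtain ⟨j, hj⟩ := S.main_simple α₀ c₀ hα₀Φ hα₀c hhighest β hβΦ i horth w hwβ hwmin
  rw [hSα] at hj
  refine ⟨j, ?_, ?_⟩
  · rw [← hj, ← hwβ]
    exact (S.w_inner w (α i) β).trans horth
  · obtain ⟨ω, hωlen, hωprod⟩ := S.exists_reduced w⁻¹
    rw [hSℓ] at hωlen
    have hωval : (w⁻¹).1 = (ω.map r).prod := congrArg Subtype.val hωprod
    have hwinv_ai : ((w⁻¹)⁻¹).1 (α i) = α j := by rw [inv_inv]; exact hj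
    have hu_aj : (w⁻¹).1 (α j) = α i := by
      rw [← hj]
      have : (w⁻¹ * w).1 (α i) = α i := by rw [inv_mul_cancel]; rfl
      exact this
    have h1NN : S.IsNN (((w⁻¹)⁻¹).1 (S.α i)) := by
      show S.IsNN (((w⁻¹)⁻¹).1 (α i))
      rw [hwinv_ai]
      exact S.isNN_alpha j
    have hlen1 : ℓ (S.ρ i * w⁻¹) = ℓ w⁻¹ + 1 := S.ℓ_left_up h1NN
    have h2NN : S.IsNN ((w⁻¹).1 (S.α j)) := by
      show S.IsNN ((w⁻¹).1 (α j))
      rw [hu_aj]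
      exact S.isNN_alpha i
    have hlen2 : ℓ (w⁻¹ * S.ρ j) = ℓ w⁻¹ + 1 := S.ℓ_up_of_isNN h2NN
    have hcomm : S.ρ i * w⁻¹ = w⁻¹ * S.ρ j := by
      apply Subtype.ext
      apply LinearEquiv.ext
      intro x
      have hL : (S.ρ i * w⁻¹).1 x = S.r i ((w⁻¹).1 x) := rfl
      have hR : (w⁻¹ * S.ρ j).1 x = (w⁻¹).1 (S.r j x) := rfl
      show (S.ρ i * w⁻¹).1 x = (w⁻¹ * S.ρ j).1 x
      rw [hL, hR, S.hr, S.hr, map_sub, map_smul]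
      have hxx : w.1 ((w⁻¹).1 x) = x := by
        have : (w * w⁻¹).1 x = x := by rw [mul_inv_cancel]; rfl
        exact this
      have h1 : ⟪S.α i, (w⁻¹).1 x⟫ = ⟪S.α j, x⟫ := by
        calc ⟪S.α i, (w⁻¹).1 x⟫ = ⟪w.1 (S.α i), w.1 ((w⁻¹).1 x)⟫ := (S.w_inner w _ _).symm
          _ = ⟪S.α j, x⟫ := by
              rw [hxx]
              exact congrArg (fun y => (⟪y, x⟫ : ℝ)) hj
      rw [h1, show (w⁻¹).1 (S.α j) = S.α i from hu_aj]
    have hψu : ψ w⁻¹ = (ω.map (sgen n adj)).prod := hψ w⁻¹ ω hωval hωlen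
    have hψ1 : ψ (S.ρ i * w⁻¹) = sgen n adj i * (ω.map (sgen n adj)).prod := by
      have hprod : (S.ρ i * w⁻¹).1 = ((i :: ω).map r).prod := by
        show r i * (w⁻¹).1 = ((i :: ω).map r).prod
        rw [hωval]
        simp
      have hlen : (i :: ω).length = ℓ (S.ρ i * w⁻¹) := by
        simp only [List.length_cons]
        rw [hωlen]
        exact hlen1.symm
      rw [hψ (S.ρ i * w⁻¹) (i :: ω) hprod hlen]
      simp
    have hψ2 : ψ (w⁻¹ * S.ρ j) = (ω.map (sgen n adj)).prod * sgen n adj j := by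
      have hprod : (w⁻¹ * S.ρ j).1 = ((ω ++ [j]).map r).prod := by
        show (w⁻¹).1 * r j = ((ω ++ [j]).map r).prod
        rw [hωval]
        simp
      have hlen : (ω ++ [j]).length = ℓ (w⁻¹ * S.ρ j) := by
        simp only [List.length_append, List.length_singleton]
        rw [hωlen]
        exact hlen2.symm
      rw [hψ (w⁻¹ * S.ρ j) (ω ++ [j]) hprod hlen]
      simp
    have hfinal : sgen n adj i * ψ w⁻¹ = ψ w⁻¹ * sgen n adj j := by
      calc sgen n adj i * ψ w⁻¹ = sgen n adj i * (ω.map (sgen n adj)).prod := by rw [hψu]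
        _ = ψ (S.ρ i * w⁻¹) := hψ1.symm
        _ = ψ (w⁻¹ * S.ρ j) := by rw [hcomm]
        _ = (ω.map (sgen n adj)).prod * sgen n adj j := hψ2
        _ = ψ w⁻¹ * sgen n adj j := by rw [← hψu]
    rw [mul_assoc, hfinal, ← mul_assoc, inv_mul_cancel, one_mul]
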